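/- Let α : R → S be a homomorphism of graded-commutative noetherian rings (or simply commutative noetherian rings), V ⊆ Spec R a specialization closed subset, and M an S-module. Then M_p = 0 for all primes p ∈ Spec R \ V if and only if M_q = 0 for all primes q ∈ Spec S \ (α*)^{-1}(V), where α* : Spec S → Spec R is the induced map on spectra and M_p denotes localization of M at p as an R-module. -/
import Mathlib

/-- If the contraction of an ideal `J` of a noetherian ring `S` along `α` is contained in a
prime `p` of `R`, then some prime of `S` containing `J` has contraction contained in `p`. -/
lemma exists_prime_comap_le {R S : Type*} [CommRing R] [CommRing S] [IsNoetherianRing S]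
    (α : R →+* S) (J : Ideal S) (p : Ideal R) [hp : p.IsPrime] (h : J.comap α ≤ p) :
    ∃ q : Ideal S, q.IsPrime ∧ J ≤ q ∧ q.comap α ≤ p := by
  have hfin : J.minimalPrimes.Finite := by
    rw [Ideal.minimalPrimes_eq_comap]
    exact (minimalPrimes.finite_of_isNoetherianRing _).image _
  have hrad : (J.radical).comap α ≤ p := by
    rw [Ideal.comap_radical]
    exact (Ideal.IsPrime.radical hp) ▸ Ideal.radical_mono h
  rw [← Ideal.sInf_minimalPrimes, Ideal.comap_sInf] at hrad
  have hinf : (hfin.toFinset.inf fun q => q.comap α) ≤ p := by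
    rw [Finset.inf_eq_iInf]
    simpa [Set.Finite.mem_toFinset] using hrad
  obtain ⟨q, hq, hle⟩ := hp.inf_le'.mp hinf
  rw [Set.Finite.mem_toFinset] at hq
  exact ⟨q, hq.1.1, hq.1.2, hle⟩

/-- **Lemma (rings).** Let `α : R → S` be a homomorphism of commutative noetherian rings,
`V ⊆ Spec R` a specialization closed subset, and `M` an `S`-module.  Then `M_p = 0` for all
primes `p ∈ Spec R \ V` if and only if `M_q = 0` for all primes
`q ∈ Spec S \ (α*)⁻¹(V)`, where the localization at a prime `p` of `R` is taken by
restricting scalars along `α`. -/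
theorem stmt0 {R S : Type*} [CommRing R] [CommRing S]
    [IsNoetherianRing R] [IsNoetherianRing S]
    (α : R →+* S) (V : Set (PrimeSpectrum R))
    (hV : ∀ p ∈ V, ∀ p' : PrimeSpectrum R, p.asIdeal ≤ p'.asIdeal → p' ∈ V)
    (M : Type*) [AddCommGroup M] [Module S M] :
    letI : Module R M := Module.compHom M α
    ((∀ p : PrimeSpectrum R, p ∉ V →
        Subsingleton (LocalizedModule p.asIdeal.primeCompl M)) ↔
      (∀ q : PrimeSpectrum S, PrimeSpectrum.comap α q ∉ V →
        Subsingleton (LocalizedModule q.asIdeal.primeCompl M))) := by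
  letI : Module R M := Module.compHom M α
  have hsmul : ∀ (r : R) (m : M), r • m = α r • m := fun _ _ => rfl
  constructor
  · intro H q hq
    rw [LocalizedModule.subsingleton_iff]
    intro m
    have := H (PrimeSpectrum.comap α q) hq
    rw [LocalizedModule.subsingleton_iff] at this
    obtain ⟨r, hr, hrm⟩ := this m
    refine ⟨α r, hr, ?_⟩
    rw [← hsmul]; exact hrm
  · intro H p hp
    rw [LocalizedModule.subsingleton_iff]
    intro m
    -- `J` is the annihilator of `m` in `S`.
    set J : Ideal S := Module.annihilator S (Submodule.span S {m}) with hJ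
    have hmJ : ∀ s : S, s ∈ J ↔ s • m = 0 := by
      intro s
      rw [hJ, Module.mem_annihilator]
      constructor
      · intro h'; simpa using h' ⟨m, Submodule.mem_span_singleton_self m⟩
      · intro h' x
        rcases x with ⟨x, hx⟩
        obtain ⟨c, rfl⟩ := Submodule.mem_span_singleton.mp hx
        simp [smul_comm s c, h']
    by_cases hle : J.comap α ≤ p.asIdeal
    · -- get a prime of `S` over `J` with contraction inside `p`.
      obtain ⟨q, hqprime, hJq, hqle⟩ := exists_prime_comap_le α J p.asIdeal hle
      have hq : PrimeSpectrum.comap α ⟨q, hqprime⟩ ∉ V := by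
        intro hmem
        exact hp (hV _ hmem p hqle)
      have := H ⟨q, hqprime⟩ hq
      rw [LocalizedModule.subsingleton_iff] at this
      obtain ⟨s, hs, hsm⟩ := this m
      exact absurd (hJq ((hmJ s).mpr hsm)) hs
    · obtain ⟨r, hrJ, hrp⟩ := Set.not_subset.mp hle
      refine ⟨r, hrp, ?_⟩
      rw [hsmul]
      exact (hmJ (α r)).mp hrJ
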